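/- arXiv:2203.07198 — 2 statements merged into one kernel-verified Lean document; each statement's English description precedes it below -/
import Mathlib

section
/- Let E be a Banach space, b ∈ L^∞(J, L(E)), and suppose ‖U(a,σ)‖_{L(E)} ≤ M e^{ω(a-σ)} and a continuous B satisfies ‖B(s)‖ ≤ ‖b‖_∞ M e^{(ω+‖b‖_∞ M)s}‖φ‖_{L^1}. Define (S(s)φ)(a) := U(a, a-s)φ(a-s) for 0 ≤ s < a and (S(s)φ)(a) := U(a,0)B(s-a) for s ≥ a. Then ‖S(s)φ‖_{L^1(J,E)} ≤ M e^{(ω + ‖b‖_∞ M)s} ‖φ‖_{L^1(J,E)} for all s ≥ 0. -/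
open MeasureTheory intervalIntegral

/-- With `(S(s)φ)(a) = U(a, a-s) φ(a-s)` for `s < a` and `(S(s)φ)(a) = U(a,0) B(s-a)` for
`s ≥ a`, and given the bounds `‖U(a,σ)‖ ≤ M e^{ω(a-σ)}` and
`‖B r‖ ≤ ‖b‖_∞ M e^{(ω+‖b‖_∞ M) r} ‖φ‖_{L¹}`, one has
`‖S(s)φ‖_{L¹(J,E)} ≤ M e^{(ω + ‖b‖_∞ M) s} ‖φ‖_{L¹(J,E)}`. -/
theorem semigroup_L1_bound
    {E : Type*} [NormedAddCommGroup E] [NormedSpace ℝ E] [CompleteSpace E]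
    (am : ℝ) (ham : 0 < am)
    (Mb : ℝ) (hMb : 0 ≤ Mb)
    (U : ℝ → ℝ → E →L[ℝ] E) (M ω : ℝ) (hM : 1 ≤ M)
    (hU : ∀ σ a : ℝ, 0 ≤ σ → σ ≤ a → ‖U a σ‖ ≤ M * Real.exp (ω * (a - σ)))
    (φ : ℝ → E) (hφ : IntegrableOn φ (Set.Ioo 0 am))
    (B : ℝ → E)
    (hB : ∀ r, 0 ≤ r →
      ‖B r‖ ≤ Mb * M * Real.exp ((ω + Mb * M) * r) * ∫ a in (0:ℝ)..am, ‖φ a‖) :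
    ∀ s, 0 ≤ s →
      (∫ a in (0:ℝ)..am, ‖if s < a then U a (a - s) (φ (a - s)) else U a 0 (B (s - a))‖)
        ≤ M * Real.exp ((ω + Mb * M) * s) * ∫ a in (0:ℝ)..am, ‖φ a‖ := by
  intro s hs
  have hM0 : 0 ≤ M := le_trans zero_le_one hM
  set k := Mb * M with hk_def
  have hk : 0 ≤ k := mul_nonneg hMb hM0
  set I := ∫ a in (0:ℝ)..am, ‖φ a‖ with hI_def
  have hI : 0 ≤ I := intervalIntegral.integral_nonneg ham.le (fun _ _ => norm_nonneg _)
  set F : ℝ → ℝ :=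
    fun a => ‖if s < a then U a (a - s) (φ (a - s)) else U a 0 (B (s - a))‖ with hF_def
  show (∫ a in (0:ℝ)..am, F a) ≤ M * Real.exp ((ω + k) * s) * I
  by_cases hInt : IntervalIntegrable F volume 0 am
  · set c := min s am with hc_def
    have hc0 : 0 ≤ c := le_min hs ham.le
    have hcs : c ≤ s := min_le_left _ _
    have hcam : c ≤ am := min_le_right _ _
    have h1 : IntervalIntegrable F volume 0 c :=
      hInt.mono_set (by
        rw [Set.uIcc_of_le hc0, Set.uIcc_of_le ham.le]
        exact Set.Icc_subset_Icc le_rfl hcam)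
    have h2 : IntervalIntegrable F volume c am :=
      hInt.mono_set (by
        rw [Set.uIcc_of_le hcam, Set.uIcc_of_le ham.le]
        exact Set.Icc_subset_Icc hc0 le_rfl)
    -- norm of φ is interval integrable on 0..am
    have hφnorm : IntervalIntegrable (fun a => ‖φ a‖) volume 0 am := by
      rw [intervalIntegrable_iff, Set.uIoc_of_le ham.le]
      exact MeasureTheory.IntegrableOn.congr_set_ae hφ.norm
        (MeasureTheory.Ioo_ae_eq_Ioc (μ := volume) (a := (0:ℝ)) (b := am)).symm
    -- piece 1: bound by explicit exponential
    set g1 : ℝ → ℝ := fun a => (M * I * Real.exp (ω * s)) * (k * Real.exp (k * (s - a)))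
      with hg1_def
    have hg1cont : Continuous g1 := by fun_prop
    have hle1 : ∀ a ∈ Set.Icc (0:ℝ) c, F a ≤ g1 a := by
      intro a ha
      have has : a ≤ s := ha.2.trans hcs
      have hns : ¬ s < a := not_lt.2 has
      have hUb : ‖U a 0‖ ≤ M * Real.exp (ω * a) := by
        simpa using hU 0 a le_rfl ha.1
      have hBb : ‖B (s - a)‖ ≤ k * Real.exp ((ω + k) * (s - a)) * I :=
        hB (s - a) (by linarith)
      have hexp : Real.exp (ω * a) * Real.exp ((ω + k) * (s - a))
          = Real.exp (ω * s) * Real.exp (k * (s - a)) := by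
        rw [← Real.exp_add, ← Real.exp_add]
        exact congrArg Real.exp (by ring)
      calc F a = ‖U a 0 (B (s - a))‖ := by rw [hF_def]; simp [hns]
        _ ≤ ‖U a 0‖ * ‖B (s - a)‖ := (U a 0).le_opNorm _
        _ ≤ (M * Real.exp (ω * a)) * (k * Real.exp ((ω + k) * (s - a)) * I) :=
            mul_le_mul hUb hBb (norm_nonneg _) (by positivity)
        _ = g1 a := by simp only [hg1_def]; linear_combination (M * k * I) * hexp
    have hg1int : IntervalIntegrable g1 volume 0 c := hg1cont.intervalIntegrable _ _
    have hint1 : (∫ a in (0:ℝ)..c, F a) ≤ ∫ a in (0:ℝ)..c, g1 a :=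
      intervalIntegral.integral_mono_on hc0 h1 hg1int hle1
    -- compute ∫ g1
    have hder : ∀ a : ℝ,
        HasDerivAt (fun x => -Real.exp (k * (s - x))) (k * Real.exp (k * (s - a))) a := by
      intro a
      have hd : HasDerivAt (fun x : ℝ => k * (s - x)) (-k) a := by
        simpa using (((hasDerivAt_id a).const_sub s).const_mul k)
      have := (Real.hasDerivAt_exp (k * (s - a))).comp a hd
      exact this.neg.congr_deriv (by ring)
    have hcalc1 : (∫ a in (0:ℝ)..c, k * Real.exp (k * (s - a)))
        = Real.exp (k * s) - Real.exp (k * (s - c)) := by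
      rw [intervalIntegral.integral_eq_sub_of_hasDerivAt (fun a _ => hder a)
        ((by fun_prop : Continuous fun a => k * Real.exp (k * (s - a))).intervalIntegrable _ _)]
      simp only [sub_zero]
      ring
    have hint1' : (∫ a in (0:ℝ)..c, g1 a)
        = (M * I * Real.exp (ω * s)) * (Real.exp (k * s) - Real.exp (k * (s - c))) := by
      rw [show (∫ a in (0:ℝ)..c, g1 a)
          = (M * I * Real.exp (ω * s)) * ∫ a in (0:ℝ)..c, k * Real.exp (k * (s - a)) from by
        simp only [hg1_def]; exact intervalIntegral.integral_const_mul _ _, hcalc1]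
    -- piece 2: bound by translate of ‖φ‖
    set g2 : ℝ → ℝ := fun a => M * Real.exp (ω * s) * ‖φ (a - s)‖ with hg2_def
    have hg2int : IntervalIntegrable g2 volume c am := by
      rcases le_or_gt am s with h | h
      · rw [show c = am from min_eq_right h]
      · rw [show c = s from min_eq_left h.le]
        have base : IntervalIntegrable (fun a => ‖φ a‖) volume 0 (am - s) :=
          hφnorm.mono_set (by
            rw [Set.uIcc_of_le (by linarith), Set.uIcc_of_le ham.le]
            exact Set.Icc_subset_Icc le_rfl (by linarith))
        have := (base.comp_sub_right s).const_mul (M * Real.exp (ω * s))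
        simpa [hg2_def] using this
    have hae : ∀ᵐ a : ℝ, a ≠ s ∧ a ≠ am := by
      have hone : ∀ᵐ a : ℝ, a ≠ s := by rw [MeasureTheory.ae_iff]; simp
      have htwo : ∀ᵐ a : ℝ, a ≠ am := by rw [MeasureTheory.ae_iff]; simp
      exact hone.and htwo
    have hle2 : F ≤ᵐ[volume.restrict (Set.Icc c am)] g2 := by
      refine (ae_restrict_iff' measurableSet_Icc).2 ?_
      filter_upwards [hae] with a hane ha
      obtain ⟨hane_s, hane_am⟩ := hane
      by_cases hsa : s < a
      · have h0 : (0:ℝ) ≤ a - s := by linarith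
        have hUb : ‖U a (a - s)‖ ≤ M * Real.exp (ω * s) := by
          have h2 := hU (a - s) a h0 (by linarith)
          rwa [show a - (a - s) = s by ring] at h2
        calc F a = ‖U a (a - s) (φ (a - s))‖ := by rw [hF_def]; simp [hsa]
          _ ≤ ‖U a (a - s)‖ * ‖φ (a - s)‖ := (U a (a - s)).le_opNorm _
          _ ≤ M * Real.exp (ω * s) * ‖φ (a - s)‖ :=
              mul_le_mul_of_nonneg_right hUb (norm_nonneg _)
      · exfalso
        have hlt : a < s := lt_of_le_of_ne (not_lt.1 hsa) hane_s
        have hca : c ≤ a := ha.1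
        rw [hc_def] at hca
        rcases min_le_iff.1 hca with h | h
        · linarith
        · exact hane_am (le_antisymm ha.2 h)
    have hint2 : (∫ a in c..am, F a) ≤ ∫ a in c..am, g2 a :=
      intervalIntegral.integral_mono_ae_restrict hcam h2 hg2int hle2
    have hint2' : (∫ a in c..am, g2 a)
        = M * Real.exp (ω * s) * ∫ u in (c - s)..(am - s), ‖φ u‖ := by
      simp only [hg2_def]
      rw [intervalIntegral.integral_const_mul,
        intervalIntegral.integral_comp_sub_right (fun u => ‖φ u‖) s]
    have htail : (∫ u in (c - s)..(am - s), ‖φ u‖) ≤ I := by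
      rcases le_or_gt am s with h | h
      · rw [show c = am from min_eq_right h]
        simpa using hI
      · rw [show c = s from min_eq_left h.le, sub_self]
        exact intervalIntegral.integral_mono_interval le_rfl (by linarith) (by linarith)
          (Filter.Eventually.of_forall fun x => norm_nonneg _) hφnorm
    have hD : 1 ≤ Real.exp (k * (s - c)) := Real.one_le_exp (by nlinarith)
    have hEadd : Real.exp ((ω + k) * s) = Real.exp (ω * s) * Real.exp (k * s) := by
      rw [← Real.exp_add]; exact congrArg Real.exp (by ring)
    calc (∫ a in (0:ℝ)..am, F a) = (∫ a in (0:ℝ)..c, F a) + ∫ a in c..am, F a :=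
          (intervalIntegral.integral_add_adjacent_intervals h1 h2).symm
      _ ≤ (M * I * Real.exp (ω * s)) * (Real.exp (k * s) - Real.exp (k * (s - c)))
            + M * Real.exp (ω * s) * I := by
          refine add_le_add (hint1.trans_eq hint1') (hint2.trans ?_)
          rw [hint2']
          exact mul_le_mul_of_nonneg_left htail (by positivity)
      _ ≤ M * Real.exp ((ω + k) * s) * I := by
          rw [hEadd]
          nlinarith [mul_nonneg (mul_nonneg (mul_nonneg hM0 hI) (Real.exp_pos (ω * s)).le)
            (sub_nonneg.2 hD)]
  · rw [intervalIntegral.integral_undef hInt]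
    positivity
end

section
/- Let X, Y be Banach spaces with Y ⊆ X, and let U(t,s), V(t,s) ∈ L(X) be evolution systems with ‖U(t,s)‖_{L(X)} ≤ M₀ e^{η(t-s)} and ‖V(t,s)‖_{L(Y)} ≤ M₁ e^{η(t-s)}, V(r,s)Y ⊆ Y. Suppose for ψ ∈ Y the map r ↦ U(t,r)V(r,s)ψ is piecewise differentiable on [s,t] with derivative U(t,r)(B(r) − A(r))V(r,s)ψ, where A, B : [0,T] → L(Y, X). Then ‖U(t,s)ψ − V(t,s)ψ‖_X ≤ M₀ M₁ e^{η(t-s)} ‖ψ‖_Y ∫_s^t ‖A(r) − B(r)‖_{L(Y,X)} dr. -/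
open Real MeasureTheory intervalIntegral

/-- Perturbation estimate comparing two evolution systems: if `r ↦ U(t,r)V(r,s)ψ` is
continuous on `[s,t]` and differentiable off a finite set with derivative
`U(t,r)((B r − A r)(V(r,s)ψ))`, and `U`, `V` satisfy exponential bounds in `X` resp. `Y`,
then `‖U(t,s)ψ − V(t,s)ψ‖_X ≤ M₀ M₁ e^{η(t-s)} ‖ψ‖_Y ∫_s^t ‖A r − B r‖_{L(Y,X)} dr`. -/
theorem evolution_system_perturbation_estimate
    {X Y : Type*} [NormedAddCommGroup X] [NormedSpace ℝ X] [CompleteSpace X]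
    [NormedAddCommGroup Y] [NormedSpace ℝ Y] [CompleteSpace Y]
    (ι : Y →L[ℝ] X) (T M₀ M₁ η : ℝ) (hM₀ : 1 ≤ M₀) (hM₁ : 1 ≤ M₁)
    (s t : ℝ) (hs : 0 ≤ s) (hst : s ≤ t) (htT : t ≤ T)
    (U : ℝ → ℝ → X →L[ℝ] X) (V : ℝ → ℝ → Y →L[ℝ] Y)
    (A B : ℝ → Y →L[ℝ] X) (ψ : Y)
    (hUid : ∀ x : X, U t t x = x) (hVid : V s s ψ = ψ)
    (hUb : ∀ r, s ≤ r → r ≤ t → ‖U t r‖ ≤ M₀ * exp (η * (t - r)))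
    (hVb : ∀ r, s ≤ r → r ≤ t → ‖V r s ψ‖ ≤ M₁ * exp (η * (r - s)) * ‖ψ‖)
    (hfc : ContinuousOn (fun r => U t r (ι (V r s ψ))) (Set.Icc s t))
    (F : Set ℝ) (hF : F.Finite)
    (hderiv : ∀ r ∈ Set.Ioo s t \ F,
      HasDerivAt (fun r => U t r (ι (V r s ψ))) (U t r ((B r - A r) (V r s ψ))) r)
    (hint : IntervalIntegrable (fun r => ‖A r - B r‖) volume s t) :
    ‖U t s (ι ψ) - ι (V t s ψ)‖ ≤
      M₀ * M₁ * exp (η * (t - s)) * ‖ψ‖ * ∫ r in s..t, ‖A r - B r‖ := by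
  set f : ℝ → X := fun r => U t r (ι (V r s ψ)) with hf
  set f' : ℝ → X := fun r => U t r ((B r - A r) (V r s ψ)) with hf'
  set C : ℝ := M₀ * M₁ * exp (η * (t - s)) * ‖ψ‖ with hC
  have hC0 : 0 ≤ C := by positivity
  -- pointwise bound on the derivative
  have hb : ∀ r ∈ Set.Icc s t, ‖f' r‖ ≤ C * ‖A r - B r‖ := by
    intro r hr
    have h1 : ‖f' r‖ ≤ ‖U t r‖ * (‖B r - A r‖ * ‖V r s ψ‖) :=
      le_trans ((U t r).le_opNorm _)
        (mul_le_mul_of_nonneg_left ((B r - A r).le_opNorm _) (norm_nonneg _))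
    have h2 : ‖U t r‖ * (‖B r - A r‖ * ‖V r s ψ‖) ≤
        (M₀ * exp (η * (t - r))) * (‖A r - B r‖ * (M₁ * exp (η * (r - s)) * ‖ψ‖)) := by
      rw [norm_sub_rev]
      exact mul_le_mul (hUb r hr.1 hr.2)
        (mul_le_mul_of_nonneg_left (hVb r hr.1 hr.2) (norm_nonneg _))
        (by positivity) (by positivity)
    refine h1.trans (h2.trans (le_of_eq ?_))
    have he : exp (η * (t - r)) * exp (η * (r - s)) = exp (η * (t - s)) := by
      rw [← Real.exp_add]; ring_nf
    rw [hC, ← he]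
    ring
  -- integrability of C * ‖A - B‖
  have hintC : IntervalIntegrable (fun r => C * ‖A r - B r‖) volume s t := hint.const_mul C
  -- integrability of f'
  have hmeas : AEStronglyMeasurable f' (volume.restrict (Set.Ioc s t)) := by
    have hz : volume ((Set.Ioc s t) \ (Set.Ioo s t \ F)) = 0 := by
      have hsub : (Set.Ioc s t) \ (Set.Ioo s t \ F) ⊆ {t} ∪ F := by
        intro x hx
        rcases hx with ⟨hx1, hx2⟩
        by_cases hxF : x ∈ F
        · exact Or.inr hxF
        · left
          by_contra hxt
          exact hx2 ⟨⟨hx1.1, lt_of_le_of_ne hx1.2 hxt⟩, hxF⟩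
      exact measure_mono_null hsub
        (measure_union_null (measure_singleton t) (hF.measure_zero _))
    have hz' : volume.restrict (Set.Ioc s t) (Set.Ioc s t \ (Set.Ioo s t \ F)) = 0 :=
      le_antisymm ((Measure.restrict_apply_le _ _).trans hz.le) bot_le
    have h0 : ∀ᵐ x ∂(volume.restrict (Set.Ioc s t)),
        x ∉ Set.Ioc s t \ (Set.Ioo s t \ F) :=
      (measure_eq_zero_iff_ae_notMem).1 hz'
    have hae : f' =ᵐ[volume.restrict (Set.Ioc s t)] deriv f := by
      filter_upwards [h0, ae_restrict_mem measurableSet_Ioc] with x hx1 hx2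
      have hm : x ∈ Set.Ioo s t \ F := by
        by_contra h; exact hx1 ⟨hx2, h⟩
      exact ((hderiv x hm).deriv).symm
    exact (aestronglyMeasurable_deriv f _).congr hae.symm
  have hintf' : IntervalIntegrable f' volume s t := by
    rw [intervalIntegrable_iff_integrableOn_Ioc_of_le hst]
    refine Integrable.mono' (g := fun r => C * ‖A r - B r‖) ?_ hmeas ?_
    · exact (intervalIntegrable_iff_integrableOn_Ioc_of_le hst).1 hintC
    · filter_upwards [ae_restrict_mem measurableSet_Ioc] with x hx
      exact hb x ⟨hx.1.le, hx.2⟩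
  -- fundamental theorem of calculus
  have hftc : ∫ r in s..t, f' r = f t - f s :=
    MeasureTheory.integral_eq_of_hasDerivAt_off_countable_of_le f f' hst
      hF.countable hfc hderiv hintf'
  have hend : f t - f s = ι (V t s ψ) - U t s (ι ψ) := by
    simp only [hf, hUid, hVid]
  -- conclude
  have key : ‖U t s (ι ψ) - ι (V t s ψ)‖ = ‖∫ r in s..t, f' r‖ := by
    rw [hftc, hend, norm_sub_rev]
  rw [key]
  have hle : ‖∫ r in s..t, f' r‖ ≤ |∫ r in s..t, C * ‖A r - B r‖| := by
    refine intervalIntegral.norm_integral_le_abs_of_norm_le ?_ hintC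
    rw [Set.uIoc_of_le hst]
    filter_upwards [ae_restrict_mem measurableSet_Ioc] with x hx
    exact hb x ⟨hx.1.le, hx.2⟩
  have hpos : 0 ≤ ∫ r in s..t, C * ‖A r - B r‖ :=
    intervalIntegral.integral_nonneg hst (fun x _ => by positivity)
  rw [abs_of_nonneg hpos] at hle
  calc ‖∫ r in s..t, f' r‖ ≤ ∫ r in s..t, C * ‖A r - B r‖ := hle
    _ = C * ∫ r in s..t, ‖A r - B r‖ := by rw [intervalIntegral.integral_const_mul]
    _ = M₀ * M₁ * exp (η * (t - s)) * ‖ψ‖ * ∫ r in s..t, ‖A r - B r‖ := by rw [hC]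
end
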